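/- (Kozlov's theorem, part (iii).) Consider a discrete-time random walk in a time-dependent random environment with law ℙ on Ω^ℕ stationary under all space-time shifts. Assume {θ_{1,z} : z ∈ U} is an ergodic family of transformations for ℙ. Then there is at most one invariant probability measure for the environmental process which is absolutely continuous with respect to ℙ: if ν and ν' are both invariant and both absolutely continuous with respect to ℙ, then ν = ν'. -/

import Mathlib

open MeasureTheory

namespace KozlovPartThree

/-- Points of the lattice `ℤ^d`. -/
abbrev Zd (d : ℕ) := Fin d → ℤ

/-- The space `Ω^ℕ` of time-dependent environments. -/
abbrev EnvSpace (d : ℕ) := ℕ → Zd d → Zd d → ℝ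

/-- The space-time shift `θ_{n,x}`. -/
def thetaShift (d : ℕ) (n : ℕ) (x : Zd d) (ω : EnvSpace d) : EnvSpace d :=
  fun m y e => ω (n + m) (y + x) e

/-- `ω` is an honest environment with jump range `U`. -/
def IsEnv (d : ℕ) (U : Finset (Zd d)) (ω : EnvSpace d) : Prop :=
  ∀ n x, (∀ e ∈ U, 0 < ω n x e) ∧ (∀ e, e ∉ U → ω n x e = 0) ∧ (∑ e ∈ U, ω n x e = 1)

/-- The transition operator of the environmental process. -/
def Rop (d : ℕ) (U : Finset (Zd d)) (g : EnvSpace d → ℝ) (ω : EnvSpace d) : ℝ :=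
  ∑ e ∈ U, ω 0 0 e * g (thetaShift d 1 e ω)

/-- `ν` is an invariant distribution for the environmental process. -/
def IsInvariantMeasure (d : ℕ) (U : Finset (Zd d)) (ν : Measure (EnvSpace d)) : Prop :=
  ∀ g : EnvSpace d → ℝ, Measurable g → (∃ C, ∀ ω, |g ω| ≤ C) →
    ∫ ω, Rop d U g ω ∂ν = ∫ ω, g ω ∂ν

/-! ### Auxiliary general lemmas: upgrading almost invariant sets to invariant sets -/

section TailSet

open Set

variable {α : Type*} [MeasurableSpace α]

/-- The `limsup` set `⋂ N ⋃ (n ≥ N) T^{-n} B`. -/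
def tailSet (T : α → α) (B : Set α) : Set α :=
  ⋂ N : ℕ, ⋃ n : ℕ, ⋃ _ : N ≤ n, T^[n] ⁻¹' B

omit [MeasurableSpace α] in
lemma mem_tailSet {T : α → α} {B : Set α} {x : α} :
    x ∈ tailSet T B ↔ ∀ N : ℕ, ∃ n, N ≤ n ∧ T^[n] x ∈ B := by
  simp [tailSet]

lemma measurableSet_tailSet {T : α → α} (hT : Measurable T) {B : Set α}
    (hB : MeasurableSet B) : MeasurableSet (tailSet T B) :=
  MeasurableSet.iInter fun _ => MeasurableSet.iUnion fun n => MeasurableSet.iUnion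
    fun _ => (hT.iterate n) hB

omit [MeasurableSpace α] in
lemma preimage_tailSet_self {T : α → α} {B : Set α} :
    T ⁻¹' (tailSet T B) = tailSet T B := by
  ext x
  simp only [mem_preimage, mem_tailSet]
  constructor
  · intro h N
    obtain ⟨n, hn, hx⟩ := h N
    refine ⟨n + 1, hn.trans (Nat.le_succ n), ?_⟩
    rwa [Function.iterate_succ_apply]
  · intro h N
    obtain ⟨n, hn, hx⟩ := h (N + 1)
    obtain ⟨m, rfl⟩ := Nat.exists_eq_add_of_le hn
    refine ⟨N + m, by omega, ?_⟩
    have : N + 1 + m = (N + m) + 1 := by omega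
    rw [this] at hx
    rwa [Function.iterate_succ_apply] at hx

omit [MeasurableSpace α] in
lemma preimage_tailSet_comm {T S : α → α} (hc : S ∘ T = T ∘ S) {B : Set α}
    (hB : S ⁻¹' B = B) : S ⁻¹' (tailSet T B) = tailSet T B := by
  have hcomm : Function.Commute S T := fun x => congrFun hc x
  ext x
  simp only [mem_preimage, mem_tailSet]
  have key : ∀ n x, (T^[n] (S x) ∈ B ↔ T^[n] x ∈ B) := by
    intro n x
    have h1 : T^[n] (S x) = S (T^[n] x) := ((hcomm.iterate_right n) x).symm
    rw [h1, ← mem_preimage, hB]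
  exact ⟨fun h N => by obtain ⟨n, hn, hx⟩ := h N; exact ⟨n, hn, (key n x).1 hx⟩,
    fun h N => by obtain ⟨n, hn, hx⟩ := h N; exact ⟨n, hn, (key n x).2 hx⟩⟩

lemma ae_symmDiff_iterate {μ : Measure α} {T : α → α} (hT : MeasurePreserving T μ μ)
    {B : Set α} (hB : MeasurableSet B) (h : μ (symmDiff B (T ⁻¹' B)) = 0) (n : ℕ) :
    μ (symmDiff B (T^[n] ⁻¹' B)) = 0 := by
  induction n with
  | zero => simp
  | succ n ih =>
    have h1 : μ (symmDiff (T ⁻¹' B) (T^[n+1] ⁻¹' B)) = 0 := by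
      have : T^[n+1] ⁻¹' B = T ⁻¹' (T^[n] ⁻¹' B) := by
        rw [Function.iterate_succ, Set.preimage_comp]
      rw [this, ← Set.preimage_symmDiff, hT.measure_preimage]
      · exact ih
      · exact ((hB.symmDiff ((hT.measurable.iterate n) hB))).nullMeasurableSet
    have := measure_symmDiff_le B (T ⁻¹' B) (T^[n+1] ⁻¹' B) (μ := μ)
    rw [h, h1] at this
    simpa using this

lemma measure_symmDiff_tailSet {μ : Measure α} {T : α → α} (hT : MeasurePreserving T μ μ)
    {B : Set α} (hB : MeasurableSet B) (h : μ (symmDiff B (T ⁻¹' B)) = 0) :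
    μ (symmDiff B (tailSet T B)) = 0 := by
  have hsub : symmDiff B (tailSet T B) ⊆ ⋃ n : ℕ, symmDiff B (T^[n] ⁻¹' B) := by
    intro x hx
    rcases hx with ⟨hxB, hxnot⟩ | ⟨hxT, hxnot⟩
    · rw [mem_tailSet] at hxnot
      push_neg at hxnot
      obtain ⟨N, hN⟩ := hxnot
      exact mem_iUnion.2 ⟨N, Or.inl ⟨hxB, hN N le_rfl⟩⟩
    · rw [mem_tailSet] at hxT
      obtain ⟨n, -, hn⟩ := hxT 0
      exact mem_iUnion.2 ⟨n, Or.inr ⟨hn, hxnot⟩⟩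
  exact measure_mono_null hsub (measure_iUnion_null fun n => ae_symmDiff_iterate hT hB h n)

/-- Upgrading a set almost invariant under a commuting finite family of measure
preserving maps to an exactly invariant set. -/
lemma exists_invariant_of_ae_invariant {μ : Measure α} {ι : Type*} [DecidableEq ι]
    (V : Finset ι) (T : ι → α → α)
    (hmeas : ∀ e ∈ V, Measurable (T e))
    (hpres : ∀ e ∈ V, MeasurePreserving (T e) μ μ)
    (hcomm : ∀ e ∈ V, ∀ e' ∈ V, T e ∘ T e' = T e' ∘ T e)
    {B : Set α} (hB : MeasurableSet B)
    (hae : ∀ e ∈ V, μ (symmDiff B (T e ⁻¹' B)) = 0) :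
    ∃ B', MeasurableSet B' ∧ μ (symmDiff B B') = 0 ∧ ∀ e ∈ V, T e ⁻¹' B' = B' := by
  induction V using Finset.induction_on with
  | empty => exact ⟨B, hB, by simp, by simp⟩
  | @insert a s ha ih =>
    obtain ⟨B', hB', haeB', hinvB'⟩ := ih
      (fun e he => hmeas e (Finset.mem_insert_of_mem he))
      (fun e he => hpres e (Finset.mem_insert_of_mem he))
      (fun e he e' he' => hcomm e (Finset.mem_insert_of_mem he) e' (Finset.mem_insert_of_mem he'))
      (fun e he => hae e (Finset.mem_insert_of_mem he))
    have hma : Measurable (T a) := hmeas a (Finset.mem_insert_self a s)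
    have hpa : MeasurePreserving (T a) μ μ := hpres a (Finset.mem_insert_self a s)
    have haeA : μ (symmDiff B' (T a ⁻¹' B')) = 0 := by
      have h1 : μ (symmDiff (T a ⁻¹' B) (T a ⁻¹' B')) = 0 := by
        rw [← Set.preimage_symmDiff, hpa.measure_preimage (hB.symmDiff hB').nullMeasurableSet]
        exact haeB'
      have h2 : μ (symmDiff B (T a ⁻¹' B')) = 0 := by
        have := measure_symmDiff_le B (T a ⁻¹' B) (T a ⁻¹' B') (μ := μ)
        rw [hae a (Finset.mem_insert_self a s), h1] at this
        simpa using this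
      have := measure_symmDiff_le B' B (T a ⁻¹' B') (μ := μ)
      rw [symmDiff_comm B' B, haeB', h2] at this
      simpa using this
    refine ⟨tailSet (T a) B', measurableSet_tailSet hma hB', ?_, ?_⟩
    · have h3 : μ (symmDiff B' (tailSet (T a) B')) = 0 :=
        measure_symmDiff_tailSet hpa hB' haeA
      have := measure_symmDiff_le B B' (tailSet (T a) B') (μ := μ)
      rw [haeB', h3] at this
      simpa using this
    · intro e he
      rcases Finset.mem_insert.1 he with rfl | he'
      · exact preimage_tailSet_self
      · exact preimage_tailSet_comm
          (hcomm e (Finset.mem_insert_of_mem he') a (Finset.mem_insert_self a s))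
          (hinvB' e he')

end TailSet

/-! ### The transition operator on measures -/

variable {d : ℕ}

lemma measurable_thetaShift (n : ℕ) (x : Zd d) : Measurable (thetaShift d n x) := by
  unfold thetaShift
  refine measurable_pi_lambda _ fun m => measurable_pi_lambda _ fun y =>
    measurable_pi_lambda _ fun f => ?_
  exact (measurable_pi_apply f).comp
    ((measurable_pi_apply (y + x)).comp (measurable_pi_apply (n + m)))

lemma thetaShift_comm (e e' : Zd d) :
    thetaShift d 1 e ∘ thetaShift d 1 e' = thetaShift d 1 e' ∘ thetaShift d 1 e := by
  funext ω m y f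
  simp only [Function.comp_apply, thetaShift]
  rw [add_right_comm y e' e, add_comm 1 (1 + m), add_assoc]

lemma measurable_eval (e : Zd d) : Measurable (fun ω : EnvSpace d => ω 0 0 e) :=
  (measurable_pi_apply e).comp ((measurable_pi_apply (0 : Zd d)).comp (measurable_pi_apply 0))

/-- The weight of the jump `e` at the origin. -/
noncomputable def w (e : Zd d) (ω : EnvSpace d) : ENNReal := ENNReal.ofReal (ω 0 0 e)

lemma measurable_w (e : Zd d) : Measurable (w e) :=
  ENNReal.measurable_ofReal.comp (measurable_eval e)

/-- The measure-level transition operator of the environmental process. -/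
noncomputable def measR (U : Finset (Zd d)) (ρ : Measure (EnvSpace d)) : Measure (EnvSpace d) :=
  ∑ e ∈ U, (ρ.withDensity (w e)).map (thetaShift d 1 e)

lemma measR_apply (U : Finset (Zd d)) (ρ : Measure (EnvSpace d)) {A : Set (EnvSpace d)}
    (hA : MeasurableSet A) :
    measR U ρ A = ∑ e ∈ U, ∫⁻ ω in (thetaShift d 1 e ⁻¹' A), w e ω ∂ρ := by
  rw [measR, Measure.finset_sum_apply]
  refine Finset.sum_congr rfl fun e _ => ?_
  rw [Measure.map_apply (measurable_thetaShift 1 e) hA,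
    withDensity_apply _ ((measurable_thetaShift 1 e) hA)]

lemma measR_mono (U : Finset (Zd d)) {ρ ρ' : Measure (EnvSpace d)} (h : ρ ≤ ρ') :
    measR U ρ ≤ measR U ρ' := by
  refine Measure.le_iff.2 fun s hs => ?_
  rw [measR_apply U ρ hs, measR_apply U ρ' hs]
  exact Finset.sum_le_sum fun e _ => lintegral_mono' (Measure.restrict_mono le_rfl h) le_rfl

lemma measR_add (U : Finset (Zd d)) (ρ ρ' : Measure (EnvSpace d)) :
    measR U (ρ + ρ') = measR U ρ + measR U ρ' := by
  simp only [measR, withDensity_add_measure, Measure.map_add _ _ (measurable_thetaShift 1 _),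
    Finset.sum_add_distrib]

lemma measR_smul (U : Finset (Zd d)) (c : ENNReal) (ρ : Measure (EnvSpace d)) :
    measR U (c • ρ) = c • measR U ρ := by
  simp only [measR, withDensity_smul_measure, Measure.map_smul, Finset.smul_sum]

lemma measR_univ (U : Finset (Zd d)) (ρ : Measure (EnvSpace d))
    (hρ : ∀ᵐ ω ∂ρ, IsEnv d U ω) :
    measR U ρ Set.univ = ρ Set.univ := by
  rw [measR_apply U ρ MeasurableSet.univ]
  simp only [Set.preimage_univ, Measure.restrict_univ]
  rw [← lintegral_finset_sum _ (fun e _ => measurable_w e)]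
  have h1 : ∀ᵐ ω ∂ρ, ∑ e ∈ U, w e ω = 1 := by
    filter_upwards [hρ] with ω hω
    obtain ⟨hpos, -, hsum⟩ := hω 0 0
    simp only [w]
    rw [← ENNReal.ofReal_sum_of_nonneg (fun e he => (hpos e he).le), hsum, ENNReal.ofReal_one]
  rw [lintegral_congr_ae h1, lintegral_one]

/-- An invariant probability measure absolutely continuous with respect to an environment
measure is a fixed point of the measure-level transition operator. -/
lemma measR_eq_self (U : Finset (Zd d)) (P : Measure (EnvSpace d))
    (hsupp : ∀ᵐ ω ∂P, IsEnv d U ω)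
    (ν : Measure (EnvSpace d)) [IsProbabilityMeasure ν]
    (hinv : IsInvariantMeasure d U ν) (hac : ν ≪ P) :
    measR U ν = ν := by
  have hsuppν : ∀ᵐ ω ∂ν, IsEnv d U ω := hac.ae_le hsupp
  refine Measure.ext fun A hA => ?_
  set g : EnvSpace d → ℝ := A.indicator 1 with hg
  have hg_meas : Measurable g := measurable_one.indicator hA
  have hg_nonneg : ∀ ω, 0 ≤ g ω := fun ω => Set.indicator_nonneg (fun _ _ => zero_le_one) ω
  have heq := hinv g hg_meas ⟨1, fun ω => by
    by_cases h : ω ∈ A <;> simp [hg, Set.indicator_apply, h]⟩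
  have hR_meas : Measurable (Rop d U g) := by
    refine Finset.measurable_sum _ fun e _ => ?_
    exact (measurable_eval e).mul (hg_meas.comp (measurable_thetaShift 1 e))
  have hR_nonneg : 0 ≤ᵐ[ν] Rop d U g := by
    filter_upwards [hsuppν] with ω hω
    refine Finset.sum_nonneg fun e he => mul_nonneg ((hω 0 0).1 e he).le (hg_nonneg _)
  rw [integral_eq_lintegral_of_nonneg_ae hR_nonneg hR_meas.aestronglyMeasurable,
    integral_indicator_one hA] at heq
  have hpoint : ∀ᵐ ω ∂ν, ENNReal.ofReal (Rop d U g ω)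
      = ∑ e ∈ U, (thetaShift d 1 e ⁻¹' A).indicator (w e) ω := by
    filter_upwards [hsuppν] with ω hω
    rw [Rop, ENNReal.ofReal_sum_of_nonneg
      (fun e he => mul_nonneg ((hω 0 0).1 e he).le (hg_nonneg _))]
    refine Finset.sum_congr rfl fun e he => ?_
    by_cases h : thetaShift d 1 e ω ∈ A
    · rw [ENNReal.ofReal_mul ((hω 0 0).1 e he).le]
      simp [hg, Set.indicator_apply, h, w]
    · simp [hg, Set.indicator_apply, h]
  rw [lintegral_congr_ae hpoint] at heq
  have hsum_eq : ∫⁻ ω, ∑ e ∈ U, (thetaShift d 1 e ⁻¹' A).indicator (w e) ω ∂ν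
      = measR U ν A := by
    rw [lintegral_finset_sum _
      (fun e _ => (measurable_w e).indicator ((measurable_thetaShift 1 e) hA)),
      measR_apply U ν hA]
    exact Finset.sum_congr rfl fun e _ =>
      lintegral_indicator ((measurable_thetaShift 1 e) hA) _
  rw [hsum_eq] at heq
  have hfin : measR U ν A ≠ ⊤ := by
    refine ne_top_of_le_ne_top ?_ (measure_mono (Set.subset_univ A))
    rw [measR_univ U ν hsuppν]
    simp
  exact (ENNReal.toReal_eq_toReal_iff' hfin (measure_ne_top ν A)).1 heq

/-- Key ergodicity lemma: any fixed point of the measure-level transition operator which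
is absolutely continuous with respect to `P` is in fact equivalent to `P`. -/
lemma abs_cont_of_fixed (U : Finset (Zd d)) (P : Measure (EnvSpace d)) [IsProbabilityMeasure P]
    (hsupp : ∀ᵐ ω ∂P, IsEnv d U ω)
    (hstat : ∀ (n : ℕ) (x : Zd d), P.map (thetaShift d n x) = P)
    (herg : ∀ A : Set (EnvSpace d), MeasurableSet A →
      (∀ e ∈ U, thetaShift d 1 e ⁻¹' A = A) → P A = 0 ∨ P A = 1)
    (σ : Measure (EnvSpace d)) [IsProbabilityMeasure σ] (hσ : σ ≪ P)
    (hfix : measR U σ = σ) : P ≪ σ := by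
  classical
  have hsuppσ : ∀ᵐ ω ∂σ, IsEnv d U ω := hσ.ae_le hsupp
  set f := σ.rnDeriv P with hf
  have hfm : Measurable f := Measure.measurable_rnDeriv σ P
  haveI : SigmaFinite σ := inferInstance
  haveI : SigmaFinite P := inferInstance
  haveI : σ.HaveLebesgueDecomposition P := inferInstance
  have hwd : P.withDensity f = σ := Measure.withDensity_rnDeriv_eq σ P hσ
  have hσ_eq : ∀ s, MeasurableSet s → σ s = ∫⁻ x in s, f x ∂P := fun s hs => by
    rw [← hwd, withDensity_apply _ hs]
  set B : Set (EnvSpace d) := f ⁻¹' ({0}ᶜ) with hBdef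
  have hB : MeasurableSet B := hfm (measurableSet_singleton 0).compl
  have hBc : MeasurableSet Bᶜ := hB.compl
  have hσBc : σ Bᶜ = 0 := by
    rw [hσ_eq _ hBc]
    refine (setLIntegral_eq_zero_iff hBc hfm).2 (Filter.Eventually.of_forall fun x hx => ?_)
    simpa [hBdef] using hx
  have hσB : σ B = 1 := by
    have h := measure_add_measure_compl (μ := σ) hB
    rw [hσBc, add_zero, measure_univ] at h
    exact h
  have hpre : ∀ e ∈ U, σ (thetaShift d 1 e ⁻¹' Bᶜ) = 0 := by
    intro e he
    have h0 : measR U σ Bᶜ = 0 := by rw [hfix]; exact hσBc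
    rw [measR_apply U σ hBc] at h0
    have hterm : ∫⁻ ω in thetaShift d 1 e ⁻¹' Bᶜ, w e ω ∂σ = 0 :=
      (Finset.sum_eq_zero_iff.1 h0) e he
    have hae := (setLIntegral_eq_zero_iff ((measurable_thetaShift 1 e) hBc)
      (measurable_w e)).1 hterm
    rw [measure_eq_zero_iff_ae_notMem]
    filter_upwards [hae, hsuppσ] with x hx henv hmem
    have h1 : w e x = 0 := hx hmem
    have h2 : 0 < x 0 0 e := (henv 0 0).1 e he
    exact absurd h1 (ENNReal.ofReal_pos.2 h2).ne'
  have hsymm : ∀ e ∈ U, P (symmDiff B (thetaShift d 1 e ⁻¹' B)) = 0 := by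
    intro e he
    have hmp : MeasurePreserving (thetaShift d 1 e) P P :=
      ⟨measurable_thetaShift 1 e, hstat 1 e⟩
    have hd1 : P (B \ thetaShift d 1 e ⁻¹' B) = 0 := by
      have h1 : σ (thetaShift d 1 e ⁻¹' Bᶜ) = 0 := hpre e he
      rw [hσ_eq _ ((measurable_thetaShift 1 e) hBc)] at h1
      have hae := (setLIntegral_eq_zero_iff ((measurable_thetaShift 1 e) hBc) hfm).1 h1
      rw [ae_iff] at hae
      refine measure_mono_null ?_ hae
      intro x hx
      have hxS : x ∈ thetaShift d 1 e ⁻¹' Bᶜ := by simpa using hx.2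
      have hxf : f x ≠ 0 := by simpa [hBdef] using hx.1
      exact fun himp => hxf (himp hxS)
    have hPB : P (thetaShift d 1 e ⁻¹' B) = P B := hmp.measure_preimage hB.nullMeasurableSet
    have h2 : P (B ∩ thetaShift d 1 e ⁻¹' B) + P (B \ thetaShift d 1 e ⁻¹' B) = P B :=
      measure_inter_add_diff B ((measurable_thetaShift 1 e) hB)
    rw [hd1, add_zero] at h2
    have h3 : P (thetaShift d 1 e ⁻¹' B ∩ B) + P (thetaShift d 1 e ⁻¹' B \ B)
        = P (thetaShift d 1 e ⁻¹' B) := measure_inter_add_diff _ hB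
    rw [Set.inter_comm, h2, hPB, ← h2] at h3
    have hd2 : P (thetaShift d 1 e ⁻¹' B \ B) = 0 := by
      have hne : P (B ∩ thetaShift d 1 e ⁻¹' B) ≠ ⊤ := measure_ne_top P _
      exact (ENNReal.add_right_inj hne).1 (by simpa using h3)
    rw [Set.symmDiff_def]
    exact measure_union_null hd1 hd2
  obtain ⟨B', hB', haeBB', hinvB'⟩ := exists_invariant_of_ae_invariant U
    (fun e => thetaShift d 1 e)
    (fun e _ => measurable_thetaShift 1 e)
    (fun e _ => ⟨measurable_thetaShift 1 e, hstat 1 e⟩)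
    (fun e _ e' _ => thetaShift_comm e e') hB hsymm
  have hPBB' : P B = P B' := measure_congr (measure_symmDiff_eq_zero_iff.1 haeBB')
  have hPB1 : P B = 1 := by
    rcases herg B' hB' hinvB' with h0 | h1
    · exfalso
      have h2 : σ B = 0 := hσ (by rw [hPBB']; exact h0)
      rw [hσB] at h2
      exact one_ne_zero h2
    · rw [hPBB', h1]
  have hPBc : P Bᶜ = 0 := by
    have h := measure_add_measure_compl (μ := P) hB
    rw [hPB1, measure_univ] at h
    exact (ENNReal.add_right_inj ENNReal.one_ne_top).1 (by simpa using h)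
  refine Measure.AbsolutelyContinuous.mk fun s hs hσs => ?_
  rw [hσ_eq s hs] at hσs
  have hae := (setLIntegral_eq_zero_iff hs hfm).1 hσs
  rw [ae_iff] at hae
  have hsB : P (s ∩ B) = 0 := by
    refine measure_mono_null ?_ hae
    intro x hx
    have hxf : f x ≠ 0 := by simpa [hBdef] using hx.2
    exact fun himp => hxf (himp hx.1)
  have h4 : P (s ∩ B) + P (s \ B) = P s := measure_inter_add_diff s hB
  have h5 : P (s \ B) = 0 := measure_mono_null (fun x hx => hx.2) hPBc
  rw [hsB, h5, add_zero] at h4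
  exact h4.symm

/-- cancellation helper -/
lemma ennreal_cancel_helper {a b a' b' : ENNReal} (ha : a ≤ a') (hb : b ≤ b')
    (h : a' + b' = a + b) (ha' : a' ≠ ⊤) (hb' : b' ≠ ⊤) : a = a' := by
  refine le_antisymm ha ?_
  have h1 : a' + b' ≤ a + b' := h.trans_le (add_le_add_right hb a)
  exact (ENNReal.add_le_add_iff_right hb').1 h1

/-- **Kozlov's theorem, part (iii).** Suppose `ℙ` is stationary under all
space-time shifts and `{θ_{1,z} : z ∈ U}` is an ergodic family for `ℙ`.  Then there is
at most one invariant probability measure for the environmental process absolutely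
continuous with respect to `ℙ`. -/
theorem invariant_measure_unique {d : ℕ} (hd : 1 ≤ d)
    (U : Finset (Zd d)) (hUne : U.Nonempty)
    (P : Measure (EnvSpace d)) [IsProbabilityMeasure P]
    (hsupp : ∀ᵐ ω ∂P, IsEnv d U ω)
    (hstat : ∀ (n : ℕ) (x : Zd d), P.map (thetaShift d n x) = P)
    (herg : ∀ A : Set (EnvSpace d), MeasurableSet A →
      (∀ e ∈ U, thetaShift d 1 e ⁻¹' A = A) → P A = 0 ∨ P A = 1)
    (ν ν' : Measure (EnvSpace d)) [IsProbabilityMeasure ν] [IsProbabilityMeasure ν']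
    (hinv : IsInvariantMeasure d U ν) (hac : ν ≪ P)
    (hinv' : IsInvariantMeasure d U ν') (hac' : ν' ≪ P) :
    ν = ν' := by
  classical
  have hνR : measR U ν = ν := measR_eq_self U P hsupp ν hinv hac
  have hν'R : measR U ν' = ν' := measR_eq_self U P hsupp ν' hinv' hac'
  -- the infimum measure
  set τ : Measure (EnvSpace d) := ν ⊓ ν' with hτdef
  have hτν : τ ≤ ν := inf_le_left
  have hτν' : τ ≤ ν' := inf_le_right
  have hτfin : IsFiniteMeasure τ := isFiniteMeasure_of_le ν hτν
  have hτac : τ ≪ P := (Measure.absolutelyContinuous_of_le hτν).trans hac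
  have hsuppτ : ∀ᵐ ω ∂τ, IsEnv d U ω := hτac.ae_le hsupp
  -- τ is a fixed point
  have hτR_le : measR U τ ≤ τ := le_inf ((measR_mono U hτν).trans_eq hνR)
    ((measR_mono U hτν').trans_eq hν'R)
  have hτR_univ : measR U τ Set.univ = τ Set.univ := measR_univ U τ hsuppτ
  have hτfin' : ∀ s : Set (EnvSpace d), τ s ≠ ⊤ := fun s => measure_ne_top τ s
  have hτR : measR U τ = τ := by
    refine Measure.ext fun A hA => ?_
    have h1 : measR U τ A ≤ τ A := Measure.le_iff.1 hτR_le A hA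
    have h2 : measR U τ Aᶜ ≤ τ Aᶜ := Measure.le_iff.1 hτR_le Aᶜ hA.compl
    have h3 : τ A + τ Aᶜ = measR U τ A + measR U τ Aᶜ := by
      rw [measure_add_measure_compl hA, measure_add_measure_compl hA, hτR_univ]
    exact ennreal_cancel_helper h1 h2 h3 (hτfin' A) (hτfin' Aᶜ)
  -- the difference measures
  haveI hτfinI : IsFiniteMeasure τ := hτfin
  set ρ : Measure (EnvSpace d) := ν - τ with hρdef
  set ρ' : Measure (EnvSpace d) := ν' - τ with hρ'def
  have hρτ : ρ + τ = ν := Measure.sub_add_cancel_of_le hτν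
  have hρ'τ : ρ' + τ = ν' := Measure.sub_add_cancel_of_le hτν'
  have hρ_le : ρ ≤ ν := by rw [← hρτ]; exact Measure.le_add_right le_rfl
  have hρ'_le : ρ' ≤ ν' := by rw [← hρ'τ]; exact Measure.le_add_right le_rfl
  haveI hρfin : IsFiniteMeasure ρ := isFiniteMeasure_of_le ν hρ_le
  haveI hρ'fin : IsFiniteMeasure ρ' := isFiniteMeasure_of_le ν' hρ'_le
  -- ρ and ρ' are fixed points
  have hcancel : ∀ {a b : ENNReal}, a + τ Set.univ = b + τ Set.univ → a = b := by
    intro a b h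
    rw [add_comm a _, add_comm b _] at h
    exact (ENNReal.add_right_inj (hτfin' _)).1 h
  have hρR : measR U ρ = ρ := by
    have h1 : measR U ρ + measR U τ = ν := by rw [← measR_add, hρτ, hνR]
    rw [hτR] at h1
    refine Measure.ext fun A hA => ?_
    have h3 := congrArg (fun m : Measure (EnvSpace d) => m A) h1
    have h4 := congrArg (fun m : Measure (EnvSpace d) => m A) hρτ
    simp only [Measure.add_apply] at h3 h4
    have h5 : τ A + measR U ρ A = τ A + ρ A := by
      rw [add_comm (τ A), add_comm (τ A), h3, h4]
    exact (ENNReal.add_right_inj (hτfin' A)).1 h5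
  have hρ'R : measR U ρ' = ρ' := by
    have h1 : measR U ρ' + measR U τ = ν' := by rw [← measR_add, hρ'τ, hν'R]
    rw [hτR] at h1
    refine Measure.ext fun A hA => ?_
    have h3 := congrArg (fun m : Measure (EnvSpace d) => m A) h1
    have h4 := congrArg (fun m : Measure (EnvSpace d) => m A) hρ'τ
    simp only [Measure.add_apply] at h3 h4
    have h5 : τ A + measR U ρ' A = τ A + ρ' A := by
      rw [add_comm (τ A), add_comm (τ A), h3, h4]
    exact (ENNReal.add_right_inj (hτfin' A)).1 h5
  -- total masses
  have hmassν := congrArg (fun m : Measure (EnvSpace d) => m Set.univ) hρτ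
  have hmassν' := congrArg (fun m : Measure (EnvSpace d) => m Set.univ) hρ'τ
  simp only [Measure.add_apply, measure_univ] at hmassν hmassν'
  have hmass_eq : ρ Set.univ = ρ' Set.univ := hcancel (hmassν.trans hmassν'.symm)
  by_cases hc0 : ρ Set.univ = 0
  · -- no singular part: ν = τ = ν'
    have hρ0 : ρ = 0 := Measure.measure_univ_eq_zero.1 hc0
    have hρ'0 : ρ' = 0 := Measure.measure_univ_eq_zero.1 (hmass_eq ▸ hc0)
    rw [← hρτ, ← hρ'τ, hρ0, hρ'0]
  · -- otherwise both normalized parts are equivalent to P, contradiction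
    exfalso
    set c : ENNReal := ρ Set.univ with hcdef
    have hcTop : c ≠ ⊤ := measure_ne_top ρ _
    have hρac : ρ ≪ P := (Measure.absolutelyContinuous_of_le hρ_le).trans hac
    have hρ'ac : ρ' ≪ P := (Measure.absolutelyContinuous_of_le hρ'_le).trans hac'
    set σ : Measure (EnvSpace d) := c⁻¹ • ρ with hσdef
    set σ' : Measure (EnvSpace d) := c⁻¹ • ρ' with hσ'def
    haveI hσprob : IsProbabilityMeasure σ := by
      constructor
      rw [hσdef, Measure.smul_apply, smul_eq_mul, ENNReal.inv_mul_cancel hc0 hcTop]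
    haveI hσ'prob : IsProbabilityMeasure σ' := by
      constructor
      rw [hσ'def, Measure.smul_apply, smul_eq_mul, ← hmass_eq,
        ENNReal.inv_mul_cancel hc0 hcTop]
    have hσac : σ ≪ P := by
      refine Measure.AbsolutelyContinuous.mk fun s _ h0 => ?_
      rw [hσdef, Measure.smul_apply, hρac h0, smul_zero]
    have hσ'ac : σ' ≪ P := by
      refine Measure.AbsolutelyContinuous.mk fun s _ h0 => ?_
      rw [hσ'def, Measure.smul_apply, hρ'ac h0, smul_zero]
    have hσR : measR U σ = σ := by rw [hσdef, measR_smul, hρR]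
    have hσ'R : measR U σ' = σ' := by rw [hσ'def, measR_smul, hρ'R]
    have hPσ : P ≪ σ := abs_cont_of_fixed U P hsupp hstat herg σ hσac hσR
    have hPσ' : P ≪ σ' := abs_cont_of_fixed U P hsupp hstat herg σ' hσ'ac hσ'R
    -- the separating set
    set F : EnvSpace d → ENNReal := ν.rnDeriv P with hFdef
    set F' : EnvSpace d → ENNReal := ν'.rnDeriv P with hF'def
    have hFm : Measurable F := Measure.measurable_rnDeriv ν P
    have hF'm : Measurable F' := Measure.measurable_rnDeriv ν' P
    set A : Set (EnvSpace d) := {ω | F ω ≤ F' ω} with hAdef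
    have hAmeas : MeasurableSet A := measurableSet_le hFm hF'm
    haveI : SigmaFinite ν := inferInstance
    haveI : SigmaFinite ν' := inferInstance
    haveI : SigmaFinite P := inferInstance
    haveI : ν.HaveLebesgueDecomposition P := inferInstance
    haveI : ν'.HaveLebesgueDecomposition P := inferInstance
    have hwdν : P.withDensity F = ν := Measure.withDensity_rnDeriv_eq ν P hac
    have hwdν' : P.withDensity F' = ν' := Measure.withDensity_rnDeriv_eq ν' P hac'
    have hle1 : ∀ s, MeasurableSet s → s ⊆ Aᶜ → ν' s ≤ ν s := by
      intro s hs hsub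
      rw [← hwdν, ← hwdν', withDensity_apply _ hs, withDensity_apply _ hs]
      refine setLIntegral_mono hFm fun x hx => ?_
      have : ¬ F x ≤ F' x := hsub hx
      exact (lt_of_not_ge this).le
    have hle2 : ∀ s, MeasurableSet s → s ⊆ A → ν s ≤ ν' s := by
      intro s hs hsub
      rw [← hwdν, ← hwdν', withDensity_apply _ hs, withDensity_apply _ hs]
      exact setLIntegral_mono hF'm fun x hx => hsub hx
    set η : Measure (EnvSpace d) := ν.restrict A + ν'.restrict Aᶜ with hηdef
    have hην : η ≤ ν := by
      refine Measure.le_iff.2 fun s hs => ?_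
      rw [hηdef, Measure.add_apply, Measure.restrict_apply hs, Measure.restrict_apply hs]
      have h1 : ν' (s ∩ Aᶜ) ≤ ν (s ∩ Aᶜ) :=
        hle1 _ (hs.inter hAmeas.compl) Set.inter_subset_right
      calc ν (s ∩ A) + ν' (s ∩ Aᶜ) ≤ ν (s ∩ A) + ν (s ∩ Aᶜ) := add_le_add_right h1 _
        _ = ν (s ∩ A) + ν (s \ A) := by rw [Set.diff_eq]
        _ = ν s := measure_inter_add_diff s hAmeas
    have hην' : η ≤ ν' := by
      refine Measure.le_iff.2 fun s hs => ?_
      rw [hηdef, Measure.add_apply, Measure.restrict_apply hs, Measure.restrict_apply hs]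
      have h1 : ν (s ∩ A) ≤ ν' (s ∩ A) := hle2 _ (hs.inter hAmeas) Set.inter_subset_right
      calc ν (s ∩ A) + ν' (s ∩ Aᶜ) ≤ ν' (s ∩ A) + ν' (s ∩ Aᶜ) := add_le_add_left h1 _
        _ = ν' (s ∩ A) + ν' (s \ A) := by rw [Set.diff_eq]
        _ = ν' s := measure_inter_add_diff s hAmeas
    have hη_le_τ : η ≤ τ := le_inf hην hην'
    have hτA : τ A = ν A := by
      refine le_antisymm (Measure.le_iff.1 hτν A hAmeas) ?_
      have h1 : η A = ν A := by
        rw [hηdef, Measure.add_apply, Measure.restrict_apply hAmeas,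
          Measure.restrict_apply hAmeas, Set.inter_self, Set.inter_compl_self,
          measure_empty, add_zero]
      rw [← h1]
      exact Measure.le_iff.1 hη_le_τ A hAmeas
    have hτAc : τ Aᶜ = ν' Aᶜ := by
      refine le_antisymm (Measure.le_iff.1 hτν' Aᶜ hAmeas.compl) ?_
      have h1 : η Aᶜ = ν' Aᶜ := by
        rw [hηdef, Measure.add_apply, Measure.restrict_apply hAmeas.compl,
          Measure.restrict_apply hAmeas.compl, Set.inter_self, Set.compl_inter_self,
          measure_empty, zero_add]
      rw [← h1]
      exact Measure.le_iff.1 hη_le_τ Aᶜ hAmeas.compl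
    -- ρ vanishes on A, ρ' vanishes on Aᶜ
    have hρA : ρ A = 0 := by
      have h4 := congrArg (fun m : Measure (EnvSpace d) => m A) hρτ
      simp only [Measure.add_apply] at h4
      rw [hτA] at h4
      have h5 : ρ A + ν A = 0 + ν A := by rw [h4, zero_add]
      exact (ENNReal.add_left_inj (measure_ne_top ν A)).1 h5
    have hρ'Ac : ρ' Aᶜ = 0 := by
      have h4 := congrArg (fun m : Measure (EnvSpace d) => m Aᶜ) hρ'τ
      simp only [Measure.add_apply] at h4
      rw [hτAc] at h4
      have h5 : ρ' Aᶜ + ν' Aᶜ = 0 + ν' Aᶜ := by rw [h4, zero_add]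
      exact (ENNReal.add_left_inj (measure_ne_top ν' Aᶜ)).1 h5
    have hPA : P A = 0 := hPσ (by rw [hσdef, Measure.smul_apply, hρA, smul_zero])
    have hPAc : P Aᶜ = 0 := hPσ' (by rw [hσ'def, Measure.smul_apply, hρ'Ac, smul_zero])
    have : (1 : ENNReal) = 0 := by
      have h6 := measure_add_measure_compl (μ := P) hAmeas
      rw [hPA, hPAc, measure_univ, add_zero] at h6
      exact h6.symm
    exact one_ne_zero this

end KozlovPartThree
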